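/- With A_1^{2n} embedded in D_{2n} via the generators e_i ± e_{n+i}, the image of the quotient (D_{2n} + [i])/A_1^{2n} in the discriminant group (A_1^{2n})^*/A_1^{2n} ≅ 𝔽_2^{2n} equals the coset 𝒟_{2n} + [i] for each i ∈ {0,1,2,3}, where the codewords [0] = (0^{2n}), [1] = (1^n 0^n), [2] = (0^{n-1} 1 0^{n-1} 1), [3] = (1^{n-1} 0^n 1). -/
import Mathlib

/-- The standard dot product on `ℝ^m`. -/
def dot {m : ℕ} (x y : Fin m → ℝ) : ℝ := ∑ i, x i * y i

/-- The lattice `D_m ⊂ ℝ^m`: integer vectors with even coordinate sum. -/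
def Dset (m : ℕ) : Set (Fin m → ℝ) :=
  {x | (∀ i, ∃ k : ℤ, x i = (k : ℝ)) ∧ ∃ k : ℤ, (∑ i, x i) = 2 * (k : ℝ)}

/-- The glue vectors `[0] = 0`, `[1] = (1/2,…,1/2)`, `[2] = (0,…,0,1)`,
`[3] = (1/2,…,1/2,-1/2)` for the lattice `D_m`. -/
noncomputable def glue (m : ℕ) : Fin 4 → (Fin m → ℝ) :=
  ![(fun _ => 0),
    (fun _ => 1/2),
    (fun j => if (j : ℕ) = m - 1 then 1 else 0),
    (fun j => if (j : ℕ) = m - 1 then -(1/2) else 1/2)]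

/-- The weight of a binary word: its number of nonzero entries. -/
def wt {m : ℕ} (C : Fin m → ZMod 2) : ℕ :=
  (Finset.univ.filter fun i => C i ≠ 0).card

/-- The binary code `𝒟_{2n} ⊂ 𝔽_2^{2n}`. -/
def Dcode (n : ℕ) : Set (Fin (n + n) → ZMod 2) :=
  {C | (∀ i : Fin n, C (Fin.castAdd n i) = C (Fin.natAdd n i)) ∧ wt C % 4 = 0}

/-- The glue codewords `[0] = (0^{2n})`, `[1] = (1^n 0^n)`, `[2] = (0^{n-1} 1 0^{n-1} 1)`,
`[3] = (1^{n-1} 0^n 1)`. -/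
def glueCode (n : ℕ) : Fin 4 → (Fin (n + n) → ZMod 2) :=
  ![(fun _ => 0),
    (fun j => if (j : ℕ) < n then 1 else 0),
    (fun j => if (j : ℕ) = n - 1 ∨ (j : ℕ) = n + n - 1 then 1 else 0),
    (fun j => if ((j : ℕ) < n ∧ (j : ℕ) ≠ n - 1) ∨ (j : ℕ) = n + n - 1 then 1 else 0)]

/-- The generating family `e_i + e_{n+i}` (first `n`) and `e_i - e_{n+i}` (last `n`)
of the copy of `A_1^{2n}` inside `D_{2n} ⊂ ℝ^{2n}`. -/
noncomputable def A1gen (n : ℕ) : Fin (n + n) → (Fin (n + n) → ℝ) :=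
  Fin.append
    (fun i : Fin n =>
      Pi.single (Fin.castAdd n i) (1 : ℝ) + Pi.single (Fin.natAdd n i) 1)
    (fun i : Fin n =>
      Pi.single (Fin.castAdd n i) (1 : ℝ) - Pi.single (Fin.natAdd n i) 1)

lemma dotA1_cast {n : ℕ} (x : Fin (n+n) → ℝ) (k : Fin n) :
    dot x (A1gen n (Fin.castAdd n k)) = x (Fin.castAdd n k) + x (Fin.natAdd n k) := by
  have h : A1gen n (Fin.castAdd n k)
      = Pi.single (Fin.castAdd n k) (1:ℝ) + Pi.single (Fin.natAdd n k) 1 :=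
    Fin.append_left _ _ k
  rw [dot, h]
  simp [Pi.add_apply, mul_add, Finset.sum_add_distrib, Pi.single_apply]

lemma dotA1_nat {n : ℕ} (x : Fin (n+n) → ℝ) (k : Fin n) :
    dot x (A1gen n (Fin.natAdd n k)) = x (Fin.castAdd n k) - x (Fin.natAdd n k) := by
  have h : A1gen n (Fin.natAdd n k)
      = Pi.single (Fin.castAdd n k) (1:ℝ) - Pi.single (Fin.natAdd n k) 1 :=
    Fin.append_right _ _ k
  rw [dot, h]
  simp [Pi.sub_apply, mul_sub, Finset.sum_sub_distrib, Pi.single_apply]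

lemma dot_add_left {m : ℕ} (a b v : Fin m → ℝ) : dot (a + b) v = dot a v + dot b v := by
  simp [dot, add_mul, Finset.sum_add_distrib]

lemma glue_dot (n : ℕ) (hn : 0 < n) (i : Fin 4) (j : Fin (n+n)) :
    ∃ g : ℤ, dot (glue (n+n) i) (A1gen n j) = (g : ℝ) ∧ ((g : ZMod 2)) = glueCode n i j := by
  have hneg : ((-1 : ℤ) : ZMod 2) = 1 := by decide
  induction j using Fin.addCases with
  | left k =>
    have hk : (k : ℕ) < n := k.isLt
    have cne : ¬((k:ℕ) = n + n - 1) := by omega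
    rw [dotA1_cast]
    fin_cases i
    · exact ⟨0, by simp [glue, glueCode]⟩
    · exact ⟨1, by norm_num [glue, glueCode, hk]⟩
    · by_cases hke : (k : ℕ) = n - 1
      · have c2 : (k:ℕ) + n = n + n - 1 := by omega
        have hcode : ((k:ℕ) = n - 1 ∨ (k:ℕ) = n + n - 1) := Or.inl hke
        exact ⟨1, by norm_num [glue, cne, c2], by simp [glueCode, hcode]⟩
      · have c2 : ¬((k:ℕ) + n = n + n - 1) := by omega
        have hcode : ¬((k:ℕ) = n - 1 ∨ (k:ℕ) = n + n - 1) := by omega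
        exact ⟨0, by norm_num [glue, cne, c2], by simp [glueCode, hcode]⟩
    · by_cases hke : (k : ℕ) = n - 1
      · have c2 : (k:ℕ) + n = n + n - 1 := by omega
        have hc : ¬(n - 1 = n + n - 1) := by omega
        exact ⟨0, by norm_num [glue, cne, c2], by simp [glueCode, hke, hc]⟩
      · have c2 : ¬((k:ℕ) + n = n + n - 1) := by omega
        exact ⟨1, by norm_num [glue, cne, c2], by simp [glueCode, hk, hke]⟩
  | right k =>
    have hk : (k : ℕ) < n := k.isLt
    have cne : ¬((k:ℕ) = n + n - 1) := by omega
    have cnlt : ¬((k:ℕ) + n < n) := by omega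
    have cne2 : ¬((k:ℕ) + n = n - 1) := by omega
    rw [dotA1_nat]
    fin_cases i
    · exact ⟨0, by simp [glue, glueCode]⟩
    · exact ⟨0, by norm_num [glue, glueCode, cnlt]⟩
    · by_cases hke : (k : ℕ) = n - 1
      · have c2 : (k:ℕ) + n = n + n - 1 := by omega
        have hcode : ((k:ℕ) + n = n - 1 ∨ (k:ℕ) + n = n + n - 1) := Or.inr c2
        exact ⟨-1, by norm_num [glue, cne, c2], by simp [glueCode, hcode, hneg]⟩
      · have c2 : ¬((k:ℕ) + n = n + n - 1) := by omega
        have hcode : ¬((k:ℕ) + n = n - 1 ∨ (k:ℕ) + n = n + n - 1) := by omega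
        exact ⟨0, by norm_num [glue, cne, c2], by simp [glueCode, hcode]⟩
    · by_cases hke : (k : ℕ) = n - 1
      · have c2 : (k:ℕ) + n = n + n - 1 := by omega
        exact ⟨1, by norm_num [glue, cne, c2],
          by simp [glueCode, cnlt, c2, Matrix.vecHead, Matrix.vecTail]⟩
      · have c2 : ¬((k:ℕ) + n = n + n - 1) := by omega
        exact ⟨0, by norm_num [glue, cne, c2], by simp [glueCode, cnlt, c2]⟩

lemma wt_eq_sum {m : ℕ} (C : Fin m → ZMod 2) :
    wt C = ∑ j, if C j = 0 then 0 else 1 := by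
  rw [wt, Finset.card_filter]
  exact Finset.sum_congr rfl fun j _ => by by_cases h : C j = 0 <;> simp [h]

lemma zmod2_addaddself (a g : ZMod 2) : a + g + g = a := by revert a g; decide

lemma zmod2_ite_val (a : ZMod 2) : ((if a = 0 then (0:ℕ) else 1) : ZMod 2) = a := by
  by_cases h : a = 0 <;> simp [h] <;> revert a <;> decide

lemma zmod2_eq_one (a : ZMod 2) (h : a ≠ 0) : a = 1 := by revert a; decide

lemma zmod2_val_real (a : ZMod 2) : ((a.val : ℕ) : ℝ) = if a = 0 then 0 else 1 := by
  by_cases h : a = 0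
  · simp [h]
  · rw [if_neg h, zmod2_eq_one a h]
    norm_num [show (1 : ZMod 2).val = 1 from rfl]

lemma int_sub_zmod2 (a b : ℤ) : ((a - b : ℤ) : ZMod 2) = ((a + b : ℤ) : ZMod 2) := by
  push_cast
  rw [CharTwo.sub_eq_add]

theorem stmt_8 (n : ℕ) (hn : 0 < n) (i : Fin 4) :
    {c : Fin (n + n) → ZMod 2 | ∃ x : Fin (n + n) → ℝ,
        x - glue (n + n) i ∈ Dset (n + n) ∧
        ∀ j, ∃ m : ℤ, dot x (A1gen n j) = (m : ℝ) ∧ (m : ZMod 2) = c j}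
    = {c | ∃ d ∈ Dcode n, c = d + glueCode n i} := by
  ext c
  simp only [Set.mem_setOf_eq]
  constructor
  · rintro ⟨x, ⟨hint, m, hsum⟩, hdot⟩
    choose M hM1 hM2 using hdot
    choose Y hY using hint
    choose G hG1 hG2 using glue_dot n hn i
    have hx : x = (x - glue (n+n) i) + glue (n+n) i := (sub_add_cancel _ _).symm
    have key : ∀ j : Fin (n+n),
        dot x (A1gen n j) = dot (x - glue (n+n) i) (A1gen n j) + (G j : ℝ) := by
      intro j
      conv_lhs => rw [hx]
      rw [dot_add_left, hG1]
    set d : Fin (n+n) → ZMod 2 := fun j => c j + glueCode n i j with hd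
    have keyc : ∀ k : Fin n, d (Fin.castAdd n k) =
        ((Y (Fin.castAdd n k) + Y (Fin.natAdd n k) : ℤ) : ZMod 2) := by
      intro k
      have e1 : (M (Fin.castAdd n k) : ℝ)
          = ((Y (Fin.castAdd n k) + Y (Fin.natAdd n k) + G (Fin.castAdd n k) : ℤ) : ℝ) := by
        rw [← hM1, key, dotA1_cast, hY, hY]
        push_cast
        ring
      have e2 : M (Fin.castAdd n k)
          = Y (Fin.castAdd n k) + Y (Fin.natAdd n k) + G (Fin.castAdd n k) := by
        exact_mod_cast e1
      show c (Fin.castAdd n k) + glueCode n i (Fin.castAdd n k) = _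
      rw [← hM2, ← hG2, e2]
      push_cast
      exact zmod2_addaddself _ _
    have keyn : ∀ k : Fin n, d (Fin.natAdd n k) =
        ((Y (Fin.castAdd n k) + Y (Fin.natAdd n k) : ℤ) : ZMod 2) := by
      intro k
      have e1 : (M (Fin.natAdd n k) : ℝ)
          = ((Y (Fin.castAdd n k) - Y (Fin.natAdd n k) + G (Fin.natAdd n k) : ℤ) : ℝ) := by
        rw [← hM1, key, dotA1_nat, hY, hY]
        push_cast
        ring
      have e2 : M (Fin.natAdd n k)
          = Y (Fin.castAdd n k) - Y (Fin.natAdd n k) + G (Fin.natAdd n k) := by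
        exact_mod_cast e1
      show c (Fin.natAdd n k) + glueCode n i (Fin.natAdd n k) = _
      rw [← hM2, ← hG2, e2]
      push_cast [int_sub_zmod2]
      rw [CharTwo.sub_eq_add]
      exact zmod2_addaddself _ _
    refine ⟨d, ⟨fun k => by rw [keyc, keyn], ?_⟩, ?_⟩
    · -- weight divisible by 4
      set p : Fin n → ZMod 2 := fun k =>
        ((Y (Fin.castAdd n k) + Y (Fin.natAdd n k) : ℤ) : ZMod 2) with hp
      set K : ℕ := ∑ k : Fin n, if p k = 0 then 0 else 1 with hK
      have hwt : wt d = K + K := by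
        rw [wt_eq_sum, Fin.sum_univ_add]
        congr 1
        · exact Finset.sum_congr rfl fun k _ => by rw [keyc k]
        · exact Finset.sum_congr rfl fun k _ => by rw [keyn k]
      have hYsum : (∑ j, Y j : ℤ) = 2 * m := by
        have : ((∑ j, Y j : ℤ) : ℝ) = ((2 * m : ℤ) : ℝ) := by
          push_cast
          rw [← hsum]
          exact Finset.sum_congr rfl fun j _ => (hY j).symm
        exact_mod_cast this
      have hK2 : (K : ZMod 2) = 0 := by
        have h1 : (K : ZMod 2) = ∑ k : Fin n, p k := by
          rw [hK]
          push_cast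
          exact Finset.sum_congr rfl fun k _ => zmod2_ite_val _
        have h2 : (∑ k : Fin n, p k) = ((∑ j, Y j : ℤ) : ZMod 2) := by
          simp only [hp]
          push_cast
          rw [Fin.sum_univ_add (f := fun j => ((Y j : ℤ) : ZMod 2)), Finset.sum_add_distrib]
        have h3 : ((2 : ℤ) : ZMod 2) = 0 := by decide
        rw [h1, h2, hYsum, Int.cast_mul, h3, zero_mul]
      have hdvd : 2 ∣ K := by
        rwa [ZMod.natCast_eq_zero_iff] at hK2
      obtain ⟨t, ht⟩ := hdvd
      omega
    · funext j
      show c j = d j + glueCode n i j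
      rw [hd]
      exact (zmod2_addaddself _ _).symm
  · rintro ⟨d, ⟨hdup, hwt⟩, rfl⟩
    set b : Fin (n+n) → ℝ :=
      Fin.append (fun k : Fin n => ((d (Fin.castAdd n k)).val : ℝ)) (fun _ => 0) with hb
    have hb1 : ∀ k : Fin n, b (Fin.castAdd n k) = ((d (Fin.castAdd n k)).val : ℝ) :=
      fun k => Fin.append_left _ _ k
    have hb2 : ∀ k : Fin n, b (Fin.natAdd n k) = 0 := fun k => Fin.append_right _ _ k
    refine ⟨b + glue (n+n) i, ?_, ?_⟩
    · have hbb : b + glue (n+n) i - glue (n+n) i = b := add_sub_cancel_right _ _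
      rw [hbb]
      have hS : ∑ k : Fin n, (if d (Fin.castAdd n k) = 0 then 0 else 1)
          + ∑ k : Fin n, (if d (Fin.castAdd n k) = 0 then 0 else 1) = wt d := by
        rw [wt_eq_sum, Fin.sum_univ_add]
        congr 1
        exact Finset.sum_congr rfl fun k _ => by rw [hdup k]
      set S : ℕ := ∑ k : Fin n, (if d (Fin.castAdd n k) = 0 then 0 else 1) with hSdef
      have h4 : 4 ∣ wt d := Nat.dvd_of_mod_eq_zero hwt
      have h2S : 2 ∣ S := by omega
      obtain ⟨t, ht⟩ := h2S
      refine ⟨?_, ⟨(t : ℤ), ?_⟩⟩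
      · intro j
        induction j using Fin.addCases with
        | left k => exact ⟨((d (Fin.castAdd n k)).val : ℤ), by rw [hb1]; push_cast; ring⟩
        | right k => exact ⟨0, by rw [hb2]; simp⟩
      · have hsum : ∑ j, b j = (S : ℝ) := by
          rw [Fin.sum_univ_add (f := fun j => b j)]
          simp only [hb1, hb2, Finset.sum_const_zero, add_zero, hSdef]
          push_cast
          exact Finset.sum_congr rfl fun k _ => zmod2_val_real _
        rw [hsum, ht]
        push_cast
        ring
    · intro j
      induction j using Fin.addCases with
      | left k =>
        obtain ⟨g, hg1, hg2⟩ := glue_dot n hn i (Fin.castAdd n k)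
        refine ⟨((d (Fin.castAdd n k)).val : ℤ) + g, ?_, ?_⟩
        · rw [dot_add_left, dotA1_cast, hg1, hb1, hb2]
          push_cast
          ring
        · push_cast
          rw [hg2, ZMod.natCast_zmod_val, Pi.add_apply]
      | right k =>
        obtain ⟨g, hg1, hg2⟩ := glue_dot n hn i (Fin.natAdd n k)
        refine ⟨((d (Fin.castAdd n k)).val : ℤ) + g, ?_, ?_⟩
        · rw [dot_add_left, dotA1_nat, hg1, hb1, hb2]
          push_cast
          ring
        · push_cast
          rw [hg2, ZMod.natCast_zmod_val, Pi.add_apply, hdup k]
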